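/- Let p : A → B be a morphism of cocommutative Hopf algebras over a field K, C ⊆ B a Hopf subalgebra with inclusion i : C → B, and p⁻¹(C) ⊆ A the h-inverse with inclusion j : p⁻¹(C) → A and restricted map p̂ : p⁻¹(C) → C. Then the square with j, p̂, p, i is a pullback in the category of cocommutative Hopf algebras: for any cocommutative Hopf algebra T and morphisms α : T → A, β : T → C with p∘α = i∘β, α factors (uniquely) through p⁻¹(C) compatibly with β. -/

import Mathlib

open TensorProduct Coalgebra

/-- A coalgebra is cocommutative if the comultiplication is invariant under the
switch map. -/
def IsCocomm (K A : Type*) [CommSemiring K] [AddCommMonoid A] [Module K A]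
    [Coalgebra K A] : Prop :=
  (TensorProduct.comm K A A).toLinearMap ∘ₗ (Coalgebra.comul (R := K) (A := A)) =
    Coalgebra.comul

/-- The linear map sending `a ⊗ b` to the Sweedler sum `a₁ * b * S(a₂)`
(the adjoint action of a Hopf algebra on itself). -/
noncomputable def adAct (K A : Type*) [CommSemiring K] [Semiring A] [HopfAlgebra K A] :
    A ⊗[K] A →ₗ[K] A :=
  (LinearMap.mul' K A) ∘ₗ
    (LinearMap.lTensor A ((LinearMap.mul' K A) ∘ₗ
      (TensorProduct.comm K A A).toLinearMap ∘ₗ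
      (LinearMap.rTensor A (HopfAlgebra.antipode (R := K) (A := A))))) ∘ₗ
    (TensorProduct.assoc K A A A).toLinearMap ∘ₗ
    (LinearMap.rTensor A (Coalgebra.comul (R := K) (A := A)))

/-- The linear map sending `x ⊗ y` to the Sweedler sum
`x₁ * y₁ * S(x₂) * S(y₂)` (the "Hopf commutator" `{x, y}`). -/
noncomputable def hopfComm (K A : Type*) [CommSemiring K] [Semiring A] [HopfAlgebra K A] :
    A ⊗[K] A →ₗ[K] A :=
  (LinearMap.mul' K A) ∘ₗ
    (TensorProduct.map (LinearMap.mul' K A)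
      ((LinearMap.mul' K A) ∘ₗ
        TensorProduct.map (HopfAlgebra.antipode (R := K) (A := A))
          (HopfAlgebra.antipode (R := K) (A := A)))) ∘ₗ
    (TensorProduct.tensorTensorTensorComm K A A A A).toLinearMap ∘ₗ
    (TensorProduct.map (Coalgebra.comul (R := K)) (Coalgebra.comul (R := K)))

/-- The `h`-inverse of a Hopf subalgebra `C ⊆ B` along `p : A → B`:
`p⁻¹(C) = {x ∈ A | p(x₁) ⊗ x₂ − 1 ⊗ x ∈ C⁺ ⊗ A}`. -/
noncomputable def hInv {K A B : Type*} [Field K] [Ring A] [HopfAlgebra K A]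
    [Ring B] [HopfAlgebra K B] (p : A →ₐc[K] B) (C : Subalgebra K B) : Set A :=
  {x : A | LinearMap.rTensor A p.toLinearMap (Coalgebra.comul (R := K) x) - (1 : B) ⊗ₜ[K] x ∈
    LinearMap.range (LinearMap.rTensor A
      (Submodule.subtype (C.toSubmodule ⊓ LinearMap.ker (Coalgebra.counit (R := K)))))}

/-- The square formed by the inclusions `j : p⁻¹(C) → A`, `i : C → B`, the restriction
`p̂ : p⁻¹(C) → C` and `p : A → B` is a pullback in cocommutative Hopf algebras: any
`α : T → A` and `β : T → B` landing in `C` with `p ∘ α = i ∘ β` factor uniquely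
through `p⁻¹(C)` compatibly with `β`. -/
theorem hInv_isPullback
    {K A B : Type*} [Field K] [Ring A] [HopfAlgebra K A] [Ring B] [HopfAlgebra K B]
    (hA : _root_.IsCocomm K A) (hB : _root_.IsCocomm K B) (p : A →ₐc[K] B) (C : Subalgebra K B)
    (hC_comul : ∀ c ∈ C, Coalgebra.comul (R := K) c ∈
      LinearMap.range (TensorProduct.map C.toSubmodule.subtype C.toSubmodule.subtype))
    (hC_antipode : ∀ c ∈ C, HopfAlgebra.antipode (R := K) c ∈ C)
    {T : Type*} [Ring T] [HopfAlgebra K T] (hT : _root_.IsCocomm K T)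
    (α : T →ₐc[K] A) (β : T →ₐc[K] B)
    (hβ : ∀ t, β t ∈ C) (hcomm : ∀ t, p (α t) = β t) :
    ∃! γ : T → hInv p C, ∀ t : T, ((γ t : A) = α t ∧ p (γ t : A) = β t) := by
  classical
  -- The key: every `α t` lies in `hInv p C`.
  set S : Submodule K B := C.toSubmodule ⊓ LinearMap.ker (Coalgebra.counit (R := K)) with hS
  set δ : T →ₗ[K] B := β.toLinearMap - (Algebra.linearMap K B) ∘ₗ Coalgebra.counit (R := K)
    with hδ
  have hδmem : ∀ t, δ t ∈ S := by
    intro t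
    refine ⟨?_, ?_⟩
    · exact sub_mem (hβ t) (C.algebraMap_mem _)
    · simp only [SetLike.mem_coe, LinearMap.mem_ker, hδ, LinearMap.sub_apply,
        LinearMap.coe_comp, Function.comp_apply, Algebra.linearMap_apply, map_sub,
        Bialgebra.counit_algebraMap]
      rw [show β.toLinearMap t = β t from rfl,
        CoalgHomClass.counit_comp_apply (F := T →ₐc[K] B) β t, sub_self]
  set δ' : T →ₗ[K] S := LinearMap.codRestrict S δ hδmem with hδ'
  have hfactor : (S.subtype) ∘ₗ δ' = δ := by ext t; rfl
  have key : ∀ t, α t ∈ hInv p C := by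
    intro t
    show _ ∈ LinearMap.range _
    refine ⟨TensorProduct.map δ' α.toLinearMap (Coalgebra.comul (R := K) t), ?_⟩
    have h1 : LinearMap.rTensor A (S.subtype) ∘ₗ TensorProduct.map δ' α.toLinearMap
        = TensorProduct.map δ α.toLinearMap := by
      rw [LinearMap.rTensor, ← TensorProduct.map_comp, hfactor, LinearMap.id_comp]
    rw [← LinearMap.comp_apply, h1]
    have hcomul : Coalgebra.comul (R := K) (α t)
        = TensorProduct.map α.toLinearMap α.toLinearMap (Coalgebra.comul (R := K) t) :=
      (CoalgHomClass.map_comp_comul_apply (F := T →ₐc[K] A) α t).symm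
    have hpα : p.toLinearMap ∘ₗ α.toLinearMap = β.toLinearMap := by
      ext t; exact hcomm t
    have h2 : LinearMap.rTensor A p.toLinearMap
          (TensorProduct.map α.toLinearMap α.toLinearMap (Coalgebra.comul (R := K) t))
        = TensorProduct.map β.toLinearMap α.toLinearMap (Coalgebra.comul (R := K) t) := by
      rw [← LinearMap.comp_apply, LinearMap.rTensor, ← TensorProduct.map_comp, hpα,
        LinearMap.id_comp]
    have h3 : TensorProduct.map ((Algebra.linearMap K B) ∘ₗ Coalgebra.counit (R := K))
          α.toLinearMap (Coalgebra.comul (R := K) t) = (1 : B) ⊗ₜ[K] α t := by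
      have : TensorProduct.map ((Algebra.linearMap K B) ∘ₗ Coalgebra.counit (R := K))
            α.toLinearMap
          = TensorProduct.map (Algebra.linearMap K B) α.toLinearMap ∘ₗ
            LinearMap.rTensor T (Coalgebra.counit (R := K) (A := T)) := by
        apply TensorProduct.ext'
        intro x y
        simp
      rw [this, LinearMap.comp_apply, Coalgebra.rTensor_counit_comul,
        TensorProduct.map_tmul]
      simp
      rfl
    have h4 : TensorProduct.map δ α.toLinearMap (Coalgebra.comul (R := K) t)
        = TensorProduct.map β.toLinearMap α.toLinearMap (Coalgebra.comul (R := K) t)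
          - TensorProduct.map ((Algebra.linearMap K B) ∘ₗ Coalgebra.counit (R := K))
            α.toLinearMap (Coalgebra.comul (R := K) t) := by
      have : TensorProduct.map δ α.toLinearMap
          = TensorProduct.map β.toLinearMap α.toLinearMap
            - TensorProduct.map ((Algebra.linearMap K B) ∘ₗ Coalgebra.counit (R := K))
              α.toLinearMap := by
        apply TensorProduct.ext'
        intro x y
        simp [hδ, TensorProduct.sub_tmul]
      rw [this]; rfl
    rw [h4, hcomul, h2, h3]
  refine ⟨fun t => ⟨α t, key t⟩, fun t => ⟨rfl, hcomm t⟩, ?_⟩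
  intro γ' hγ'
  funext t
  exact Subtype.ext ((hγ' t).1)
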